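/- Let X be a two-dimensional strictly convex real normed space and let x₁, x₂ be unit vectors with x₁ ≠ ±x₂. If z ∈ X satisfies x₁ ⊥_B z and x₂ ⊥_B z, then z = 0. -/

import Mathlib

/-- Birkhoff-James orthogonality: `u ⊥_B v` iff `‖u + λ v‖ ≥ ‖u‖` for all real `λ`. -/
def BJOrth {E : Type*} [NormedAddCommGroup E] [NormedSpace ℝ E] (u v : E) : Prop :=
  ∀ l : ℝ, ‖u‖ ≤ ‖u + l • v‖

theorem stmt6 {X : Type*} [NormedAddCommGroup X] [NormedSpace ℝ X]
    [StrictConvexSpace ℝ X] (hdim : Module.finrank ℝ X = 2)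
    (x₁ x₂ : X) (hx₁ : ‖x₁‖ = 1) (hx₂ : ‖x₂‖ = 1)
    (hne : x₁ ≠ x₂) (hne' : x₁ ≠ -x₂)
    (z : X) (h₁ : BJOrth x₁ z) (h₂ : BJOrth x₂ z) : z = 0 := by
  by_contra hz
  have hx₁0 : x₁ ≠ 0 := by intro h; rw [h] at hx₁; simp at hx₁
  -- x₁ and z are linearly independent
  have hli : LinearIndependent ℝ ![x₁, z] := by
    rw [linearIndependent_fin2]
    refine ⟨hz, fun a ha => ?_⟩
    simp only [Matrix.cons_val_one, Matrix.head_cons, Matrix.cons_val_zero] at ha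
    have h' := h₁ (-a)
    rw [hx₁, ← ha] at h'
    simp at h'
    linarith
  -- they span X
  have hspan : Submodule.span ℝ {x₁, z} = ⊤ := by
    have := hli.span_eq_top_of_card_eq_finrank (by simp [hdim])
    rwa [show Set.range ![x₁, z] = {x₁, z} by
      simp [Matrix.range_cons, Matrix.range_empty, Set.pair_comm]] at this
  obtain ⟨a, b, hab⟩ := Submodule.mem_span_pair.1
    (by rw [hspan]; trivial : x₂ ∈ Submodule.span ℝ {x₁, z})
  -- 1 ≤ |a|
  have h1a : (1 : ℝ) ≤ |a| := by
    have := h₂ (-b)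
    rw [hx₂] at this
    calc (1:ℝ) ≤ ‖x₂ + (-b) • z‖ := this
      _ = ‖a • x₁‖ := by rw [← hab]; congr 1; module
      _ = |a| := by rw [norm_smul, hx₁]; simp
  have ha0 : a ≠ 0 := by rintro rfl; simp at h1a; linarith [abs_nonneg (0:ℝ)]
  -- key: ‖x₁ + (b/a) • z‖ = 1/|a| ≥ 1 by h₁, so |a| ≤ 1
  have hkey : x₁ + (b / a) • z = a⁻¹ • x₂ := by
    rw [← hab, smul_add, smul_smul, smul_smul, inv_mul_cancel₀ ha0, one_smul,
      div_eq_inv_mul]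
  have hnorm : ‖x₁ + (b / a) • z‖ = |a|⁻¹ := by
    rw [hkey, norm_smul, hx₂]; simp
  have ha1 : |a| = 1 := by
    have := h₁ (b / a)
    rw [hx₁, hnorm] at this
    have : |a| ≤ 1 := by
      rw [← one_div, le_div_iff₀ (by positivity)] at this; linarith
    linarith
  -- so ‖x₁ + (b/a) • z‖ = 1 = ‖x₁‖; strict convexity forces b = 0
  have hb : b = 0 := by
    by_contra hb0
    have hne2 : x₁ ≠ x₁ + (b / a) • z := by
      intro h
      have : (b / a) • z = 0 := by
        have := h.symm; rwa [add_eq_left] at this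
      rcases smul_eq_zero.1 this with h' | h'
      · exact hb0 (by field_simp at h'; simpa using h')
      · exact hz h'
    have := (norm_midpoint_lt_iff (x := x₁) (y := x₁ + (b / a) • z)
      (by rw [hx₁, hnorm, ha1]; simp)).2 hne2
    rw [hx₁] at this
    have heq : (1 / 2 : ℝ) • (x₁ + (x₁ + (b / a) • z)) = x₁ + (b / (2 * a)) • z := by
      field_simp; module
    rw [heq] at this
    have := h₁ (b / (2 * a))
    rw [hx₁] at this
    linarith
  -- then x₂ = a • x₁ with a = ±1, contradiction
  rw [hb, zero_smul, add_zero] at hab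
  rcases abs_eq (by norm_num : (0:ℝ) ≤ 1) |>.1 ha1 with h | h
  · exact hne (by rw [← hab, h, one_smul])
  · exact hne' (by rw [← hab, h]; simp)
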